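/- If Γ₁,...,Γ_d are cycle-free (acyclic) subgraphs of the complete graph K_n whose edge sets partition the edge set of K_n, then d ≥ ⌊(n+1)/2⌋. -/

import Mathlib

open SimpleGraph

/-- A cycle-free `d`-partition of the complete graph on `Fin n`: each unordered pair of
distinct vertices is an edge of exactly one component, and every component is acyclic. -/
def IsCFP {n d : ℕ} (Γ : Fin d → SimpleGraph (Fin n)) : Prop :=
  (∀ u v : Fin n, u ≠ v → ∃! i, (Γ i).Adj u v) ∧ ∀ i, (Γ i).IsAcyclic

/-- `(u,v)` is the same unordered pair as `(a,b)`. -/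
def SamePair {n : ℕ} (u v a b : Fin n) : Prop := (u = a ∧ v = b) ∨ (u = b ∧ v = a)

/-- The partitions `P` and `Q` differ on the edge `(u,v)`. -/
def Differs {n d : ℕ} (P Q : Fin d → SimpleGraph (Fin n)) (u v : Fin n) : Prop :=
  ∃ i, ¬ ((Q i).Adj u v ↔ (P i).Adj u v)

/-- `Q` agrees with `P` on every edge except the edges `(x,y)`, `(x,z)`, `(y,z)`,
and differs from `P` on at least two of those three edges. -/
def FlipCond {n d : ℕ} (x y z : Fin n) (P Q : Fin d → SimpleGraph (Fin n)) : Prop :=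
  (∀ u v : Fin n, ¬ SamePair u v x y → ¬ SamePair u v x z → ¬ SamePair u v y z →
      ∀ i, ((Q i).Adj u v ↔ (P i).Adj u v)) ∧
  ((Differs P Q x y ∧ Differs P Q x z) ∨ (Differs P Q x y ∧ Differs P Q y z) ∨
    (Differs P Q x z ∧ Differs P Q y z))

/-- One involution move between cycle-free partitions. -/
def Step {n d : ℕ} (P Q : Fin d → SimpleGraph (Fin n)) : Prop :=
  IsCFP P ∧ IsCFP Q ∧ ∃ x y z : Fin n, x ≠ y ∧ x ≠ z ∧ y ≠ z ∧ FlipCond x y z P Q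

/-- Involution equivalence: a finite sequence of involution moves. -/
def InvEquiv {n d : ℕ} : (Fin d → SimpleGraph (Fin n)) → (Fin d → SimpleGraph (Fin n)) → Prop :=
  Relation.ReflTransGen Step

/-- The graph `Ω_t^{(d)}` on vertices `{1,…,2d}` (vertex `v : Fin (2d)` has label `v+1`):
the edge `(i,j)`, `i<j`, belongs to `Ω_t` iff `i+j` is even and `i ∈ {2t-1,2t}`,
or `i+j` is odd and `j ∈ {2t-1,2t}`. -/
def Omega (d t : ℕ) : SimpleGraph (Fin (2*d)) :=
  SimpleGraph.fromRel (fun u v =>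
    u.1 < v.1 ∧
    (((u.1 + v.1) % 2 = 0 ∧ (u.1 + 1 = 2*t - 1 ∨ u.1 + 1 = 2*t)) ∨
     ((u.1 + v.1) % 2 = 1 ∧ (v.1 + 1 = 2*t - 1 ∨ v.1 + 1 = 2*t))))

/-- The standard twin-star cycle-free `d`-partition `E_d = (Ω₁,…,Ω_d)`. -/
def Ed (d : ℕ) : Fin d → SimpleGraph (Fin (2*d)) := fun t => Omega d (t.1 + 1)

/-- The twin-star graph `TS_d` with `2d` vertices: centers `0` and `1` are adjacent,
center `0` is adjacent to the `d-1` leaves `2,…,d`, and center `1` to the leaves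
`d+1,…,2d-1`. -/
def TwinStar (d : ℕ) : SimpleGraph (Fin (2*d)) :=
  SimpleGraph.fromRel (fun u v =>
    (u.1 = 0 ∧ 1 ≤ v.1 ∧ v.1 ≤ d) ∨ (u.1 = 1 ∧ d + 1 ≤ v.1))

/-- The action of `(σ, τ) ∈ S_{2d} × S_d` on a `d`-partition: `σ` relabels vertices and
`τ` permutes the order of the components. -/
def actP {n d : ℕ} (σ : Equiv.Perm (Fin n)) (τ : Equiv.Perm (Fin d))
    (P : Fin d → SimpleGraph (Fin n)) : Fin d → SimpleGraph (Fin n) :=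
  fun i => (P (τ⁻¹ i)).map σ.toEmbedding

/-- One step of weak equivalence: `P = (σ,τ) · (an involution move applied to Q)`. -/
def WStep {n d : ℕ} (P Q : Fin d → SimpleGraph (Fin n)) : Prop :=
  ∃ (σ : Equiv.Perm (Fin n)) (τ : Equiv.Perm (Fin d)) (R : Fin d → SimpleGraph (Fin n)),
    Step Q R ∧ P = actP σ τ R

/-- Weak equivalence of cycle-free `d`-partitions. -/
def WeakEquiv {n d : ℕ} : (Fin d → SimpleGraph (Fin n)) → (Fin d → SimpleGraph (Fin n)) → Prop :=
  Relation.ReflTransGen WStep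

open Walk in
lemma acyclic_card_edgeFinset_add_one_le {V : Type*} [Fintype V] [Nonempty V]
    {G : SimpleGraph V} (hG : G.IsAcyclic) [Fintype G.edgeSet] :
    G.edgeFinset.card + 1 ≤ Fintype.card V := by
  classical
  set r : V → V := fun v => (G.connectedComponentMk v).out with hr
  have hmk : ∀ v, G.connectedComponentMk (r v) = G.connectedComponentMk v := by
    intro v
    exact Quot.out_eq _
  have hrr : ∀ v, G.Reachable v (r v) := by
    intro v
    exact (ConnectedComponent.eq.mp (hmk v)).symm
  have hradj : ∀ {u v}, G.Adj u v → r u = r v := by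
    intro u v h
    simp only [hr]
    rw [ConnectedComponent.connectedComponentMk_eq_of_adj h]
  have hrfix : ∀ v, r (r v) = r v := by
    intro v
    simp only [hr]
    rw [hmk v]
  have key : ∀ v, ∃! p : G.Walk v (r v), p.IsPath := by
    intro v
    obtain ⟨q⟩ := hrr v
    refine ⟨(q.toPath : G.Path _ _).1, q.toPath.2, fun p hp => ?_⟩
    exact congrArg Subtype.val (hG.path_unique ⟨p, hp⟩ q.toPath)
  choose f hf hf' using key
  have hcard : G.edgeFinset.card = (Finset.univ.filter (fun v => v ≠ r v)).card := by
    refine Eq.symm <| Finset.card_bij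
          (fun w hw => ((f w).firstDart <| ?notNil).edge)
          (fun a ha => ?memEdges) ?inj ?surj
    case notNil => exact not_nil_of_ne (by simpa using hw)
    case memEdges => simp
    case inj =>
      intros a ha b hb h
      wlog h' : (f a).length ≤ (f b).length generalizing a b
      · exact Eq.symm (this _ hb _ ha h.symm (le_of_not_ge h'))
      rw [dart_edge_eq_iff] at h
      obtain (h | h) := h
      · exact (congrArg (·.fst) h)
      · have h1 : ((f a).firstDart <| not_nil_of_ne (by simpa using ha)).snd = b :=
          congrArg (·.snd) h
        have hadj : G.Adj a b :=
          h1 ▸ ((f a).firstDart <| not_nil_of_ne (by simpa using ha)).adj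
        have hab : r a = r b := hradj hadj
        have h3 := congrArg length (hf' _ ((f _).tail.copy h1 hab) ?_)
        · replace h3 := (length_copy _ h1 hab).symm.trans h3
          rw [← add_left_inj 1] at h3
          replace h3 := (length_tail_add_one (p := f a) (not_nil_of_ne (by simpa using ha))).symm.trans h3
          omega
        · simp only [ne_eq, eq_mp_eq_cast, id_eq, isPath_copy]
          exact (isPath_copy _ h1 hab).2 (hf a).tail
    case surj =>
      simp only [mem_edgeFinset, Finset.mem_filter, Finset.mem_univ, true_and, Sym2.forall,
        SimpleGraph.mem_edgeSet]
      intros x y h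
      wlog h' : (f x).length ≤ (f y).length generalizing x y
      · rw [Sym2.eq_swap]
        exact this y x h.symm (le_of_not_ge h')
      have hxy : r x = r y := hradj h
      refine ⟨y, ?_, dart_edge_eq_mk'_iff.2 <| Or.inr ?_⟩
      · intro hyr
        rw [← hf' _ (Walk.nil.copy rfl hyr) (by simp),
            ← hf' _ ((Walk.cons h .nil).copy rfl (hyr.trans hxy.symm))
              (by simpa using h.ne)] at h'
        simp at h'
      have heq := hf' _ ((Walk.cons h.symm (f x)).copy rfl hxy)
            ((isPath_copy _ _ _).2 <| (cons_isPath_iff _ _).2 ⟨hf _, fun hy => ?contra⟩)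
      · have h2 : (f y).getVert 1 = x := by
          rw [← heq]; simp [getVert_copy]
        show ((f y).firstDart _).toProd = _
        simp only [firstDart, h2, Prod.swap_prod_mk]
      case contra =>
        suffices (f x).takeUntil y hy = .cons h .nil by
          rw [← take_spec _ hy] at h'
          have hd : (f x).dropUntil y hy = (f y).copy rfl hxy.symm := by
            have := hf' y (((f x).dropUntil y hy).copy rfl hxy)
              (by simpa using (hf x).dropUntil hy)
            rw [← this]
            simp
          simp [this, hd] at h'
        have h1 : ((f x).takeUntil y hy).IsPath := (hf _).takeUntil _
        have h2 : (Walk.cons h (.nil : G.Walk y y)).IsPath := by simpa using h.ne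
        exact congrArg Subtype.val (hG.path_unique ⟨_, h1⟩ ⟨_, h2⟩)
  have hsub : (Finset.univ.filter (fun v => v ≠ r v)) ⊆ ({r (Classical.arbitrary V)} : Finset V)ᶜ := by
    intro v hv
    simp only [Finset.mem_filter, Finset.mem_univ, true_and] at hv
    simp only [Finset.mem_compl, Finset.mem_singleton]
    intro hveq
    exact hv (by rw [hveq, hrfix])
  have := Finset.card_le_card hsub
  rw [Finset.card_compl, Finset.card_singleton] at this
  have hpos : 1 ≤ Fintype.card V := Fintype.card_pos
  omega

/-- If the edge sets of acyclic subgraphs `Γ₁, …, Γ_d` partition the edge set of `K_n`,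
then `d ≥ ⌊(n+1)/2⌋`. -/
theorem cycleFree_partition_lower_bound (n d : ℕ) (hd : 1 ≤ d)
    (Γ : Fin d → SimpleGraph (Fin n))
    (hpart : ∀ u v : Fin n, u ≠ v → ∃! i, (Γ i).Adj u v)
    (hacyc : ∀ i, (Γ i).IsAcyclic) : (n + 1) / 2 ≤ d := by
  classical
  rcases Nat.lt_or_ge n 2 with hn | hn
  · omega
  have hne : Nonempty (Fin n) := ⟨⟨0, by omega⟩⟩
  have hbound : ∀ i, (Γ i).edgeFinset.card ≤ n - 1 := by
    intro i
    have := acyclic_card_edgeFinset_add_one_le (hacyc i)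
    rw [Fintype.card_fin] at this
    omega
  have hsub : (⊤ : SimpleGraph (Fin n)).edgeFinset ⊆
      Finset.univ.biUnion (fun i => (Γ i).edgeFinset) := by
    intro e he
    induction e with
    | _ u v =>
      rw [mem_edgeFinset, mem_edgeSet, top_adj] at he
      obtain ⟨i, hi, -⟩ := hpart u v he
      exact Finset.mem_biUnion.2 ⟨i, Finset.mem_univ i, by
        rw [mem_edgeFinset, mem_edgeSet]; exact hi⟩
  have h1 : (⊤ : SimpleGraph (Fin n)).edgeFinset.card ≤ d * (n - 1) := by
    calc (⊤ : SimpleGraph (Fin n)).edgeFinset.card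
        ≤ (Finset.univ.biUnion (fun i => (Γ i).edgeFinset)).card :=
          Finset.card_le_card hsub
      _ ≤ ∑ i, (Γ i).edgeFinset.card := Finset.card_biUnion_le
      _ ≤ ∑ _i : Fin d, (n - 1) := Finset.sum_le_sum (fun i _ => hbound i)
      _ = d * (n - 1) := by simp [Finset.sum_const, mul_comm]
  have h2 : (⊤ : SimpleGraph (Fin n)).edgeFinset.card = n.choose 2 := by
    rw [card_edgeFinset_top_eq_card_choose_two, Fintype.card_fin]
  rw [h2, Nat.choose_two_right] at h1
  have heven : 2 ∣ n * (n - 1) := by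
    rcases Nat.even_or_odd n with he | ho
    · exact Dvd.dvd.mul_right he.two_dvd _
    · exact Dvd.dvd.mul_left (Nat.Odd.sub_odd ho odd_one).two_dvd _
  have h3 : n * (n - 1) ≤ 2 * (d * (n - 1)) := by
    have := Nat.mul_le_mul_left 2 h1
    rwa [Nat.mul_div_cancel' heven] at this
  have h4 : n ≤ 2 * d := by
    have hpos : 0 < n - 1 := by omega
    have := Nat.le_of_mul_le_mul_right (by linarith [h3] : n * (n-1) ≤ (2*d) * (n-1)) hpos
    exact this
  omega
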